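/- arXiv:1310.7139 — 2 statements merged into one kernel-verified Lean document; each statement's English description precedes it below -/
import Mathlib

section
/- Let X be a Banach space, Y a closed subspace of X, and ||| · ||| an equivalent norm on Y (i.e., there exist constants 0 < c ≤ C with c‖y‖ ≤ |||y||| ≤ C‖y‖ for all y ∈ Y). Then there exists an equivalent norm N on all of X whose restriction to Y equals ||| · |||. -/
/-- Any equivalent norm on a closed subspace of a Banach space extends to an
equivalent norm on the whole space. -/
theorem stmt_0 {X : Type*} [NormedAddCommGroup X] [NormedSpace ℝ X] [CompleteSpace X]
    (Y : Subspace ℝ X) (hYclosed : IsClosed (Y : Set X))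
    (f : Y → ℝ)
    (hf_add : ∀ a b : Y, f (a + b) ≤ f a + f b)
    (hf_smul : ∀ (r : ℝ) (a : Y), f (r • a) = |r| * f a)
    (c C : ℝ) (hc : 0 < c) (hcC : c ≤ C)
    (hf_low : ∀ y : Y, c * ‖y‖ ≤ f y)
    (hf_up : ∀ y : Y, f y ≤ C * ‖y‖) :
    ∃ (N : X → ℝ) (c' C' : ℝ), 0 < c' ∧ c' ≤ C' ∧
      (∀ a b : X, N (a + b) ≤ N a + N b) ∧
      (∀ (r : ℝ) (x : X), N (r • x) = |r| * N x) ∧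
      (∀ x : X, c' * ‖x‖ ≤ N x) ∧
      (∀ x : X, N x ≤ C' * ‖x‖) ∧
      (∀ y : Y, N (y : X) = f y) := by
  have hC : 0 < C := lt_of_lt_of_le hc hcC
  have hf0 : f 0 = 0 := by
    have := hf_smul 0 0
    simpa using this
  set N : X → ℝ := fun x => ⨅ y : Y, f y + C * ‖x - (y : X)‖ with hN
  -- every term dominates c * ‖x‖
  have hbd : ∀ (x : X) (y : Y), c * ‖x‖ ≤ f y + C * ‖x - (y : X)‖ := by
    intro x y
    have h1 : c * ‖(y : X)‖ ≤ f y := by simpa using hf_low y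
    have h2 : ‖x‖ - ‖(y : X)‖ ≤ ‖x - (y : X)‖ := norm_sub_norm_le _ _
    have h3 : 0 ≤ ‖x - (y : X)‖ := norm_nonneg _
    nlinarith
  have hbdd : ∀ x : X, BddBelow (Set.range fun y : Y => f y + C * ‖x - (y : X)‖) := by
    intro x
    exact ⟨c * ‖x‖, by rintro _ ⟨y, rfl⟩; exact hbd x y⟩
  have hle : ∀ (x : X) (y : Y), N x ≤ f y + C * ‖x - (y : X)‖ := fun x y =>
    ciInf_le (hbdd x) y
  have hlow : ∀ x : X, c * ‖x‖ ≤ N x := fun x => le_ciInf (hbd x)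
  have hup : ∀ x : X, N x ≤ C * ‖x‖ := by
    intro x
    have := hle x 0
    simpa [hf0] using this
  -- value on Y
  have hres : ∀ y : Y, N (y : X) = f y := by
    intro y
    apply le_antisymm
    · have := hle (y : X) y
      simpa using this
    · apply le_ciInf
      intro z
      have h1 : f y ≤ f z + f (y - z) := by
        have := hf_add z (y - z)
        simpa using this
      have h2 : f (y - z) ≤ C * ‖y - z‖ := hf_up _
      have h3 : ‖y - z‖ = ‖(y : X) - (z : X)‖ := by
        rw [← Submodule.coe_sub]; rfl
      linarith [h1, h2, h3 ▸ h2]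
  -- subadditivity
  have hadd : ∀ a b : X, N (a + b) ≤ N a + N b := by
    intro a b
    refine le_of_forall_pos_le_add ?_
    intro ε hε
    obtain ⟨ya, hya⟩ : ∃ y : Y, f y + C * ‖a - (y : X)‖ < N a + ε / 2 :=
      exists_lt_of_ciInf_lt (by linarith : N a < N a + ε / 2)
    obtain ⟨yb, hyb⟩ : ∃ y : Y, f y + C * ‖b - (y : X)‖ < N b + ε / 2 :=
      exists_lt_of_ciInf_lt (by linarith : N b < N b + ε / 2)
    have h1 : N (a + b) ≤ f (ya + yb) + C * ‖(a + b) - ((ya + yb : Y) : X)‖ :=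
      hle _ _
    have h2 : f (ya + yb) ≤ f ya + f yb := hf_add _ _
    have h3 : ‖(a + b) - ((ya + yb : Y) : X)‖ ≤ ‖a - (ya : X)‖ + ‖b - (yb : X)‖ := by
      have : (a + b) - ((ya + yb : Y) : X) = (a - (ya : X)) + (b - (yb : X)) := by
        push_cast; abel
      rw [this]; exact norm_add_le _ _
    nlinarith
  -- one-sided homogeneity for r ≠ 0
  have hsmul_le : ∀ (r : ℝ) (x : X), r ≠ 0 → N (r • x) ≤ |r| * N x := by
    intro r x hr
    have hrpos : 0 < |r| := abs_pos.mpr hr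
    refine le_of_forall_pos_le_add ?_
    intro ε hε
    obtain ⟨z, hz⟩ : ∃ z : Y, f z + C * ‖x - (z : X)‖ < N x + ε / |r| :=
      exists_lt_of_ciInf_lt
        (lt_add_of_pos_right _ (by positivity) : N x < N x + ε / |r|)
    have h1 : N (r • x) ≤ f (r • z) + C * ‖r • x - ((r • z : Y) : X)‖ := hle _ _
    have h2 : f (r • z) = |r| * f z := hf_smul r z
    have h3 : ‖r • x - ((r • z : Y) : X)‖ = |r| * ‖x - (z : X)‖ := by
      have : r • x - ((r • z : Y) : X) = r • (x - (z : X)) := by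
        push_cast; rw [smul_sub]
      rw [this, norm_smul, Real.norm_eq_abs]
    have h4 : |r| * (f z + C * ‖x - (z : X)‖) < |r| * (N x + ε / |r|) :=
      (mul_lt_mul_iff_right₀ hrpos).mpr hz
    have h5 : |r| * (N x + ε / |r|) = |r| * N x + ε := by
      field_simp
    nlinarith
  have hsmul : ∀ (r : ℝ) (x : X), N (r • x) = |r| * N x := by
    intro r x
    rcases eq_or_ne r 0 with rfl | hr
    · simp only [zero_smul, abs_zero, zero_mul]
      apply le_antisymm
      · have := hle 0 0
        simpa [hf0] using this
      · have := hlow 0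
        simpa using this
    · have hrpos : 0 < |r| := abs_pos.mpr hr
      apply le_antisymm (hsmul_le r x hr)
      have h := hsmul_le r⁻¹ (r • x) (inv_ne_zero hr)
      rw [smul_smul, inv_mul_cancel₀ hr, one_smul, abs_inv] at h
      calc |r| * N x ≤ |r| * (|r|⁻¹ * N (r • x)) := by
            exact (mul_le_mul_iff_right₀ hrpos).mpr h
        _ = N (r • x) := by field_simp
  exact ⟨N, c, C, hc, hcC, hadd, hsmul, hlow, hup, hres⟩
end

section
/- Let (B_k)_{k=1}^∞ and (B̃_j)_{j=1}^∞ be two partitions of ℕ into nonempty finite sets, and define m_k = Σ_{i ∈ B_k} 2^i and m̃_j = Σ_{i ∈ B̃_j} 2^i. If the sets of achievable finite sums agree, i.e., { Σ_{k ∈ A} m_k : A ⊆ ℕ finite } = { Σ_{j ∈ A} m̃_j : A ⊆ ℕ finite }, then the two partitions are equal (as families of sets): {B_k : k} = {B̃_j : j}. -/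
lemma sum_biUnion_two_pow (B : ℕ → Finset ℕ)
    (hdisj : ∀ k l, k ≠ l → Disjoint (B k) (B l)) (A : Finset ℕ) :
    ∑ k ∈ A, ∑ i ∈ B k, 2 ^ i = ∑ i ∈ A.biUnion B, 2 ^ i :=
  (Finset.sum_biUnion (fun k _ l _ hkl => hdisj k l hkl)).symm

lemma key (B B' : ℕ → Finset ℕ)
    (hB_disj : ∀ k l, k ≠ l → Disjoint (B k) (B l))
    (hB'_disj : ∀ k l, k ≠ l → Disjoint (B' k) (B' l))
    (hsub : {s : ℕ | ∃ A : Finset ℕ, s = ∑ k ∈ A, ∑ i ∈ B k, 2 ^ i} ⊆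
             {s : ℕ | ∃ A : Finset ℕ, s = ∑ j ∈ A, ∑ i ∈ B' j, 2 ^ i})
    (k : ℕ) : ∃ A' : Finset ℕ, B k = A'.biUnion B' := by
  have h1 : (∑ i ∈ B k, 2 ^ i) ∈
      {s : ℕ | ∃ A : Finset ℕ, s = ∑ k ∈ A, ∑ i ∈ B k, 2 ^ i} :=
    ⟨{k}, by simp⟩
  obtain ⟨A', hA'⟩ := hsub h1
  rw [sum_biUnion_two_pow B' hB'_disj] at hA'
  exact ⟨A', Finset.geomSum_injective le_rfl hA'⟩

/-- Two partitions of `ℕ` into nonempty finite sets with the same sets of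
achievable finite sums of `m_k = ∑_{i ∈ B_k} 2^i` coincide as families of sets. -/
theorem stmt_10 (B B' : ℕ → Finset ℕ)
    (hB_ne : ∀ k, (B k).Nonempty) (hB'_ne : ∀ j, (B' j).Nonempty)
    (hB_disj : ∀ k l, k ≠ l → Disjoint (B k) (B l))
    (hB'_disj : ∀ k l, k ≠ l → Disjoint (B' k) (B' l))
    (hB_cover : ∀ i : ℕ, ∃ k, i ∈ B k)
    (hB'_cover : ∀ i : ℕ, ∃ j, i ∈ B' j)
    (hsums : {s : ℕ | ∃ A : Finset ℕ, s = ∑ k ∈ A, ∑ i ∈ B k, 2 ^ i} =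
             {s : ℕ | ∃ A : Finset ℕ, s = ∑ j ∈ A, ∑ i ∈ B' j, 2 ^ i}) :
    Set.range B = Set.range B' := by
  have main : ∀ (B B' : ℕ → Finset ℕ),
      (∀ k, (B k).Nonempty) → (∀ j, (B' j).Nonempty) →
      (∀ k l, k ≠ l → Disjoint (B k) (B l)) →
      (∀ k l, k ≠ l → Disjoint (B' k) (B' l)) →
      (∀ k, ∃ A' : Finset ℕ, B k = A'.biUnion B') →
      (∀ j, ∃ A : Finset ℕ, B' j = A.biUnion B) →
      ∀ k, ∃ j, B k = B' j := by
    intro B B' hBne hB'ne hBd hB'd h1 h2 k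
    obtain ⟨A', hA'⟩ := h1 k
    -- pick j ∈ A' with B' j nonempty intersecting B k
    obtain ⟨i, hi⟩ := hBne k
    have hi' := hi
    rw [hA', Finset.mem_biUnion] at hi'
    obtain ⟨j, hjA', hij⟩ := hi'
    refine ⟨j, ?_⟩
    have hsub1 : B' j ⊆ B k := by
      rw [hA']; exact fun x hx => Finset.mem_biUnion.2 ⟨j, hjA', hx⟩
    obtain ⟨A, hA⟩ := h2 j
    obtain ⟨i2, hi2⟩ := hB'ne j
    have hi2' := hi2
    rw [hA, Finset.mem_biUnion] at hi2'
    obtain ⟨l, hlA, hil⟩ := hi2'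
    have hsub2 : B l ⊆ B' j := by
      rw [hA]; exact fun x hx => Finset.mem_biUnion.2 ⟨l, hlA, hx⟩
    have hlk : l = k := by
      by_contra hne
      exact Finset.disjoint_left.1 (hBd l k hne) hil (hsub1 (hsub2 hil))
    exact le_antisymm (hlk ▸ hsub2) hsub1
  have e1 := key B B' hB_disj hB'_disj (hsums.le) 
  have e2 := key B' B hB'_disj hB_disj (hsums.ge)
  ext s
  constructor
  · rintro ⟨k, rfl⟩
    obtain ⟨j, hj⟩ := main B B' hB_ne hB'_ne hB_disj hB'_disj e1 e2 k
    exact ⟨j, hj.symm⟩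
  · rintro ⟨j, rfl⟩
    obtain ⟨k, hk⟩ := main B' B hB'_ne hB_ne hB'_disj hB_disj e2 e1 j
    exact ⟨k, hk.symm⟩
end
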